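/- Let m be a probability measure on a measurable space F, and let σ₁, σ₂ : F → M₃(ℝ) be measurable families of 3×3 matrices with Σᵢ := ∫_F σᵢ(x) σᵢ(x)* m(dx) well-defined, symmetric positive definite. Define U(Σ₁, Σ₂) := Σ₂^{-1/2} Σ₁^{-1/2} (Σ₁^{1/2} Σ₂ Σ₁^{1/2})^{1/2}. Then ‖Σ₁^{1/2} − Σ₂^{1/2} U(Σ₁, Σ₂)‖² ≤ ∫_F ‖σ₁(x) − σ₂(x)‖² m(dx), where ‖·‖ is the Frobenius norm. -/

import Mathlib

open Matrix MeasureTheory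

noncomputable section

/-- Frobenius norm of a 3×3 real matrix. -/
def frob (M : Matrix (Fin 3) (Fin 3) ℝ) : ℝ := Real.sqrt (Matrix.trace (M * Mᵀ))

section Aux

lemma aux_mul_integrable {F : Type*} [MeasurableSpace F] {m : Measure F} {f g : F → ℝ}
    (hf : MemLp f 2 m) (hg : MemLp g 2 m) :
    Integrable (fun x => f x * g x) m := by
  have h : (fun x => f x * g x)
      = fun x => (((f + g) x) ^ 2 - f x ^ 2 - g x ^ 2) / 2 := by
    funext x; simp [Pi.add_apply]; ring
  rw [h]
  exact (((hf.add hg).integrable_sq.sub hf.integrable_sq).sub hg.integrable_sq).div_const 2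

lemma aux_entry_integrable {F : Type*} [MeasurableSpace F] {m : Measure F}
    {τ₁ τ₂ : F → Matrix (Fin 3) (Fin 3) ℝ}
    (h1 : ∀ i j, MemLp (fun x => τ₁ x i j) 2 m)
    (h2 : ∀ i j, MemLp (fun x => τ₂ x i j) 2 m) (i j : Fin 3) :
    Integrable (fun x => (τ₁ x * (τ₂ x)ᵀ) i j) m := by
  have : (fun x => (τ₁ x * (τ₂ x)ᵀ) i j)
      = fun x => ∑ k : Fin 3, τ₁ x i k * τ₂ x j k := by
    funext x; simp [Matrix.mul_apply]
  rw [this]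
  exact integrable_finset_sum _ fun k _ => aux_mul_integrable (h1 i k) (h2 j k)

lemma aux_double_sum (B : Matrix (Fin 3) (Fin 3) ℝ) (u v : Fin 3 → ℝ) :
    u ⬝ᵥ B *ᵥ v = ∑ i : Fin 3, ∑ j : Fin 3, u i * v j * B i j := by
  simp only [dotProduct, mulVec, Finset.mul_sum]
  exact Finset.sum_congr rfl fun i _ => Finset.sum_congr rfl fun j _ => by ring

lemma aux_quad_eq (τ₁ τ₂ : Matrix (Fin 3) (Fin 3) ℝ) (u v : Fin 3 → ℝ) :
    u ⬝ᵥ (τ₁ * τ₂ᵀ) *ᵥ v = (u ᵥ* τ₁) ⬝ᵥ (v ᵥ* τ₂) := by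
  rw [dotProduct_mulVec, ← vecMul_vecMul, vecMul_transpose, dotProduct_comm,
    dotProduct_mulVec, dotProduct_comm]

lemma aux_int_form {F : Type*} [MeasurableSpace F] {m : Measure F}
    {τ₁ τ₂ : F → Matrix (Fin 3) (Fin 3) ℝ}
    (h1 : ∀ i j, MemLp (fun x => τ₁ x i j) 2 m)
    (h2 : ∀ i j, MemLp (fun x => τ₂ x i j) 2 m)
    (A : Matrix (Fin 3) (Fin 3) ℝ)
    (hA : ∀ i j, A i j = ∫ x, (τ₁ x * (τ₂ x)ᵀ) i j ∂m) (u v : Fin 3 → ℝ) :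
    u ⬝ᵥ A *ᵥ v = ∫ x, (u ᵥ* τ₁ x) ⬝ᵥ (v ᵥ* τ₂ x) ∂m := by
  rw [aux_double_sum]
  have step : ∀ i j : Fin 3, u i * v j * A i j
      = ∫ x, u i * v j * (τ₁ x * (τ₂ x)ᵀ) i j ∂m := by
    intro i j; rw [hA i j, integral_const_mul]
  calc ∑ i : Fin 3, ∑ j : Fin 3, u i * v j * A i j
      = ∑ i : Fin 3, ∑ j : Fin 3, ∫ x, u i * v j * (τ₁ x * (τ₂ x)ᵀ) i j ∂m := by
        exact Finset.sum_congr rfl fun i _ => Finset.sum_congr rfl fun j _ => step i j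
    _ = ∫ x, ∑ i : Fin 3, ∑ j : Fin 3, u i * v j * (τ₁ x * (τ₂ x)ᵀ) i j ∂m := by
        rw [integral_finset_sum]
        · exact Finset.sum_congr rfl fun i _ => (integral_finset_sum _ fun j _ =>
            (aux_entry_integrable h1 h2 i j).const_mul _).symm
        · intro i _
          exact integrable_finset_sum _ fun j _ => (aux_entry_integrable h1 h2 i j).const_mul _
    _ = ∫ x, (u ᵥ* τ₁ x) ⬝ᵥ (v ᵥ* τ₂ x) ∂m := by
        congr 1; funext x; rw [← aux_quad_eq, aux_double_sum]

lemma aux_int_form_integrable {F : Type*} [MeasurableSpace F] {m : Measure F}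
    {τ₁ τ₂ : F → Matrix (Fin 3) (Fin 3) ℝ}
    (h1 : ∀ i j, MemLp (fun x => τ₁ x i j) 2 m)
    (h2 : ∀ i j, MemLp (fun x => τ₂ x i j) 2 m) (u v : Fin 3 → ℝ) :
    Integrable (fun x => (u ᵥ* τ₁ x) ⬝ᵥ (v ᵥ* τ₂ x)) m := by
  have : (fun x => (u ᵥ* τ₁ x) ⬝ᵥ (v ᵥ* τ₂ x))
      = fun x => ∑ i : Fin 3, ∑ j : Fin 3, u i * v j * (τ₁ x * (τ₂ x)ᵀ) i j := by
    funext x; rw [← aux_quad_eq, aux_double_sum]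
  rw [this]
  exact integrable_finset_sum _ fun i _ => integrable_finset_sum _ fun j _ =>
    (aux_entry_integrable h1 h2 i j).const_mul _

lemma aux_dp1 (A : Matrix (Fin 3) (Fin 3) ℝ) (u w : Fin 3 → ℝ) :
    (A *ᵥ u) ⬝ᵥ w = u ⬝ᵥ Aᵀ *ᵥ w := by
  rw [dotProduct_comm, dotProduct_mulVec, dotProduct_comm, mulVec_transpose]

lemma aux_trace_sq (A : Matrix (Fin 3) (Fin 3) ℝ) :
    Matrix.trace (A * Aᵀ) = ∑ i : Fin 3, ∑ j : Fin 3, A i j ^ 2 := by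
  simp [Matrix.trace, Matrix.mul_apply, Matrix.diag, sq]

lemma aux_trace_sq_nonneg (A : Matrix (Fin 3) (Fin 3) ℝ) :
    0 ≤ Matrix.trace (A * Aᵀ) := by
  rw [aux_trace_sq]
  exact Finset.sum_nonneg fun i _ => Finset.sum_nonneg fun j _ => sq_nonneg _

lemma aux_frob_sq (A : Matrix (Fin 3) (Fin 3) ℝ) :
    frob A ^ 2 = Matrix.trace (A * Aᵀ) :=
  Real.sq_sqrt (aux_trace_sq_nonneg A)

open scoped MatrixOrder in
/-- Trace inequality: if `R` is PSD and the quadratic form of `X` is dominated by the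
identity, then `trace (R * X) ≤ trace R`. -/
lemma aux_trace_le (R X : Matrix (Fin 3) (Fin 3) ℝ) (hR : R.PosSemidef)
    (hX : ∀ u : Fin 3 → ℝ, u ⬝ᵥ X *ᵥ u ≤ u ⬝ᵥ u) :
    Matrix.trace (R * X) ≤ Matrix.trace R := by
  have hQt : (CFC.sqrt R)ᵀ = CFC.sqrt R := (CFC.sqrt_nonneg R).posSemidef.1
  have hQQ : CFC.sqrt R * CFC.sqrt R = R := CFC.sqrt_mul_sqrt_self R hR.nonneg
  set Q := CFC.sqrt R with hQ
  have key : Matrix.trace (R * X) = Matrix.trace (Q * X * Q) := by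
    rw [← hQQ, Matrix.mul_assoc, Matrix.trace_mul_comm, Matrix.mul_assoc]
  have diag_eq : ∀ i : Fin 3, (Q * X * Q) i i = (fun k => Q i k) ⬝ᵥ X *ᵥ (fun k => Q i k) := by
    intro i
    simp only [Matrix.mul_apply, dotProduct, mulVec, Finset.sum_mul]
    rw [Finset.sum_comm]
    refine Finset.sum_congr rfl fun k _ => ?_
    simp only [dotProduct, Finset.mul_sum, Finset.sum_mul]
    refine Finset.sum_congr rfl fun j _ => ?_
    have : Q j i = Q i j := by rw [← Matrix.transpose_apply Q i j, hQt]
    rw [this]; ring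
  have diag_le : ∀ i : Fin 3, (Q * X * Q) i i ≤ R i i := by
    intro i
    rw [diag_eq i]
    refine (hX _).trans ?_
    have : (fun k => Q i k) ⬝ᵥ (fun k => Q i k) = (Q * Q) i i := by
      simp only [Matrix.mul_apply, dotProduct]
      refine Finset.sum_congr rfl fun k _ => ?_
      have : Q k i = Q i k := by rw [← Matrix.transpose_apply Q i k, hQt]
      rw [this]
    rw [this, hQQ]
  calc Matrix.trace (R * X) = ∑ i : Fin 3, (Q * X * Q) i i := key
    _ ≤ ∑ i : Fin 3, R i i := Finset.sum_le_sum fun i _ => diag_le i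
    _ = Matrix.trace R := rfl

end Aux

/-- Let `m` be a probability measure on `F` and `σ₁, σ₂ : F → M₃(ℝ)`
measurable families of matrices (entrywise measurable and square integrable), with
`Σᵢ = ∫ σᵢ σᵢ* dm` symmetric positive definite.  Let `S₁, S₂` be the (nonnegative
symmetric) square roots of `Σ₁, Σ₂` and `R` the square root of `S₁ Σ₂ S₁`, so that
`U(Σ₁,Σ₂) = S₂⁻¹ S₁⁻¹ R`.  Then
`‖Σ₁^{1/2} − Σ₂^{1/2} U(Σ₁,Σ₂)‖² ≤ ∫ ‖σ₁(x) − σ₂(x)‖² m(dx)` (Frobenius norms). -/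
theorem statement6 {F : Type*} [MeasurableSpace F] (m : Measure F)
    [IsProbabilityMeasure m]
    (σ₁ σ₂ : F → Matrix (Fin 3) (Fin 3) ℝ)
    (hmeas₁ : ∀ i j, Measurable fun x => σ₁ x i j)
    (hmeas₂ : ∀ i j, Measurable fun x => σ₂ x i j)
    (hL2₁ : ∀ i j, MemLp (fun x => σ₁ x i j) 2 m)
    (hL2₂ : ∀ i j, MemLp (fun x => σ₂ x i j) 2 m)
    (Sig₁ Sig₂ : Matrix (Fin 3) (Fin 3) ℝ)
    (hSig₁ : ∀ i j, Sig₁ i j = ∫ x, (σ₁ x * (σ₁ x)ᵀ) i j ∂m)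
    (hSig₂ : ∀ i j, Sig₂ i j = ∫ x, (σ₂ x * (σ₂ x)ᵀ) i j ∂m)
    (hpd₁ : Sig₁.PosDef) (hpd₂ : Sig₂.PosDef)
    (S₁ S₂ R : Matrix (Fin 3) (Fin 3) ℝ)
    (hS₁ : S₁.PosSemidef) (hS₁sq : S₁ * S₁ = Sig₁)
    (hS₂ : S₂.PosSemidef) (hS₂sq : S₂ * S₂ = Sig₂)
    (hR : R.PosSemidef) (hRsq : R * R = S₁ * Sig₂ * S₁) :
    frob (S₁ - S₂ * (S₂⁻¹ * S₁⁻¹ * R)) ^ 2 ≤ ∫ x, frob (σ₁ x - σ₂ x) ^ 2 ∂m := by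
  -- Transpose facts
  have hS₁t : S₁ᵀ = S₁ := hS₁.1
  have hS₂t : S₂ᵀ = S₂ := hS₂.1
  have hRt : Rᵀ = R := hR.1
  -- Invertibility
  have hdS₁ : IsUnit S₁.det := by
    have h : S₁.det * S₁.det = Sig₁.det := by rw [← Matrix.det_mul, hS₁sq]
    have := hpd₁.det_pos
    refine isUnit_iff_ne_zero.mpr fun h0 => ?_
    rw [h0, mul_zero] at h; rw [← h] at this; exact lt_irrefl _ this
  have hdS₂ : IsUnit S₂.det := by
    have h : S₂.det * S₂.det = Sig₂.det := by rw [← Matrix.det_mul, hS₂sq]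
    have := hpd₂.det_pos
    refine isUnit_iff_ne_zero.mpr fun h0 => ?_
    rw [h0, mul_zero] at h; rw [← h] at this; exact lt_irrefl _ this
  have hdR : IsUnit R.det := by
    have h : R.det * R.det = S₁.det * Sig₂.det * S₁.det := by
      rw [← Matrix.det_mul, hRsq, Matrix.det_mul, Matrix.det_mul]
    refine isUnit_iff_ne_zero.mpr fun h0 => ?_
    rw [h0, mul_zero] at h
    have hpos := hpd₂.det_pos
    have h1 : S₁.det ≠ 0 := fun h1 => by rw [h1] at hdS₁; simp at hdS₁
    have h2 : S₁.det * S₁.det * Sig₂.det = 0 := by linear_combination -h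
    rcases mul_eq_zero.mp h2 with h3 | h3
    · exact h1 (mul_self_eq_zero.mp h3)
    · exact absurd h3 (ne_of_gt hpos)
  have hS₁inv : S₁ * S₁⁻¹ = 1 := Matrix.mul_nonsing_inv _ hdS₁
  have hS₁inv' : S₁⁻¹ * S₁ = 1 := Matrix.nonsing_inv_mul _ hdS₁
  have hS₂inv : S₂ * S₂⁻¹ = 1 := Matrix.mul_nonsing_inv _ hdS₂
  have hS₂inv' : S₂⁻¹ * S₂ = 1 := Matrix.nonsing_inv_mul _ hdS₂
  have hRinv : R * R⁻¹ = 1 := Matrix.mul_nonsing_inv _ hdR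
  have hRinv' : R⁻¹ * R = 1 := Matrix.nonsing_inv_mul _ hdR
  have hS₁it : (S₁⁻¹)ᵀ = S₁⁻¹ := by rw [Matrix.transpose_nonsing_inv, hS₁t]
  have hS₂it : (S₂⁻¹)ᵀ = S₂⁻¹ := by rw [Matrix.transpose_nonsing_inv, hS₂t]
  -- The cross matrix M
  set M : Matrix (Fin 3) (Fin 3) ℝ :=
    Matrix.of fun i j => ∫ x, (σ₁ x * (σ₂ x)ᵀ) i j ∂m with hMdef
  have hM : ∀ i j, M i j = ∫ x, (σ₁ x * (σ₂ x)ᵀ) i j ∂m := fun i j => rfl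
  -- Quadratic form positivity of the block matrix
  have hQuad : ∀ u v : Fin 3 → ℝ,
      0 ≤ u ⬝ᵥ Sig₁ *ᵥ u + 2 * (u ⬝ᵥ M *ᵥ v) + v ⬝ᵥ Sig₂ *ᵥ v := by
    intro u v
    have i1 := aux_int_form_integrable hL2₁ hL2₁ u u
    have i2 := aux_int_form_integrable hL2₁ hL2₂ u v
    have i3 := aux_int_form_integrable hL2₂ hL2₂ v v
    have i2' : Integrable (fun x => 2 * ((u ᵥ* σ₁ x) ⬝ᵥ (v ᵥ* σ₂ x))
        + (v ᵥ* σ₂ x) ⬝ᵥ (v ᵥ* σ₂ x)) m := (i2.const_mul 2).add i3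
    calc (0:ℝ) ≤ ∫ x, ((u ᵥ* σ₁ x) ⬝ᵥ (u ᵥ* σ₁ x)
          + (2 * ((u ᵥ* σ₁ x) ⬝ᵥ (v ᵥ* σ₂ x)) + (v ᵥ* σ₂ x) ⬝ᵥ (v ᵥ* σ₂ x))) ∂m := by
          refine integral_nonneg fun x => ?_
          have h : (u ᵥ* σ₁ x) ⬝ᵥ (u ᵥ* σ₁ x) + (2 * ((u ᵥ* σ₁ x) ⬝ᵥ (v ᵥ* σ₂ x))
              + (v ᵥ* σ₂ x) ⬝ᵥ (v ᵥ* σ₂ x))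
              = (u ᵥ* σ₁ x + v ᵥ* σ₂ x) ⬝ᵥ (u ᵥ* σ₁ x + v ᵥ* σ₂ x) := by
            simp only [dotProduct, Pi.add_apply, Finset.sum_add_distrib, Finset.mul_sum,
              ← Finset.sum_add_distrib]
            refine Finset.sum_congr rfl fun k _ => by ring
          rw [h]
          exact Finset.sum_nonneg fun k _ => mul_self_nonneg _
      _ = (∫ x, (u ᵥ* σ₁ x) ⬝ᵥ (u ᵥ* σ₁ x) ∂m)
          + (2 * (∫ x, (u ᵥ* σ₁ x) ⬝ᵥ (v ᵥ* σ₂ x) ∂m)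
          + ∫ x, (v ᵥ* σ₂ x) ⬝ᵥ (v ᵥ* σ₂ x) ∂m) := by
          rw [integral_add i1 i2', integral_add (i2.const_mul 2) i3, integral_const_mul]
      _ = u ⬝ᵥ Sig₁ *ᵥ u + 2 * (u ⬝ᵥ M *ᵥ v) + v ⬝ᵥ Sig₂ *ᵥ v := by
          rw [aux_int_form hL2₁ hL2₁ Sig₁ hSig₁ u u,
            aux_int_form hL2₁ hL2₂ M hM u v,
            aux_int_form hL2₂ hL2₂ Sig₂ hSig₂ v v]
          ring
  -- the contraction C
  set C : Matrix (Fin 3) (Fin 3) ℝ := S₁⁻¹ * M * S₂⁻¹ with hCdef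
  have hMC : S₁ * C * S₂ = M := by
    rw [hCdef]
    calc S₁ * (S₁⁻¹ * M * S₂⁻¹) * S₂ = (S₁ * S₁⁻¹) * M * (S₂⁻¹ * S₂) := by
          simp only [Matrix.mul_assoc]
      _ = M := by rw [hS₁inv, hS₂inv', Matrix.one_mul, Matrix.mul_one]
  have hC : ∀ u v : Fin 3 → ℝ, (u ⬝ᵥ C *ᵥ v) ^ 2 ≤ (u ⬝ᵥ u) * (v ⬝ᵥ v) := by
    intro u v
    set p := S₁⁻¹ *ᵥ u with hp
    set q := S₂⁻¹ *ᵥ v with hq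
    have hform : u ⬝ᵥ C *ᵥ v = p ⬝ᵥ M *ᵥ q := by
      rw [hCdef, ← Matrix.mulVec_mulVec, ← Matrix.mulVec_mulVec, hp, hq,
        ← hS₁it, ← aux_dp1, hS₁it]
    have ha : p ⬝ᵥ Sig₁ *ᵥ p = u ⬝ᵥ u := by
      rw [← hS₁sq, ← Matrix.mulVec_mulVec, ← hS₁t, ← aux_dp1, hS₁t, hp,
        Matrix.mulVec_mulVec, hS₁inv, Matrix.one_mulVec]
    have hc : q ⬝ᵥ Sig₂ *ᵥ q = v ⬝ᵥ v := by
      rw [← hS₂sq, ← Matrix.mulVec_mulVec, ← hS₂t, ← aux_dp1, hS₂t, hq,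
        Matrix.mulVec_mulVec, hS₂inv, Matrix.one_mulVec]
    have hdisc := discrim_le_zero (a := u ⬝ᵥ u) (b := 2 * (p ⬝ᵥ M *ᵥ q)) (c := v ⬝ᵥ v) ?_
    · rw [discrim] at hdisc
      rw [hform]
      nlinarith [hdisc]
    · intro t
      have h := hQuad (t • p) q
      simp only [smul_dotProduct, dotProduct_smul, Matrix.mulVec_smul,
        smul_eq_mul] at h
      rw [ha, hc] at h
      nlinarith [h]
  -- the orthogonal matrix W
  set W : Matrix (Fin 3) (Fin 3) ℝ := S₂ * S₁ * R⁻¹ with hWdef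
  have hWt : Wᵀ * W = 1 := by
    rw [hWdef]
    have : (S₂ * S₁ * R⁻¹)ᵀ = R⁻¹ * S₁ * S₂ := by
      rw [Matrix.transpose_mul, Matrix.transpose_mul, Matrix.transpose_nonsing_inv,
        hRt, hS₁t, hS₂t, Matrix.mul_assoc]
    rw [this]
    calc R⁻¹ * S₁ * S₂ * (S₂ * S₁ * R⁻¹)
        = R⁻¹ * (S₁ * (S₂ * S₂) * S₁) * R⁻¹ := by simp only [Matrix.mul_assoc]
      _ = R⁻¹ * (R * R) * R⁻¹ := by rw [hS₂sq, ← hRsq]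
      _ = (R⁻¹ * R) * (R * R⁻¹) := by simp only [Matrix.mul_assoc]
      _ = 1 := by rw [hRinv', hRinv, Matrix.one_mul]
  have hWR : W * R = S₂ * S₁ := by
    rw [hWdef, Matrix.mul_assoc, hRinv', Matrix.mul_one]
  -- contraction property of X = C * W
  have hCW : ∀ u : Fin 3 → ℝ, u ⬝ᵥ (C * W) *ᵥ u ≤ u ⬝ᵥ u := by
    intro u
    have h1 : u ⬝ᵥ (C * W) *ᵥ u = u ⬝ᵥ C *ᵥ (W *ᵥ u) := by
      rw [Matrix.mulVec_mulVec]
    have h2 : (W *ᵥ u) ⬝ᵥ (W *ᵥ u) = u ⬝ᵥ u := by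
      rw [aux_dp1, Matrix.mulVec_mulVec, hWt, Matrix.one_mulVec]
    have h3 := hC u (W *ᵥ u)
    rw [h2] at h3
    rw [h1]
    have hu : (0:ℝ) ≤ u ⬝ᵥ u := Finset.sum_nonneg fun k _ => mul_self_nonneg _
    nlinarith [hu, h3, sq_nonneg (u ⬝ᵥ C *ᵥ (W *ᵥ u) - u ⬝ᵥ u)]
  -- trace M ≤ trace R
  have htraceM : Matrix.trace M ≤ Matrix.trace R := by
    have h1 : Matrix.trace M = Matrix.trace (R * (C * W)) := by
      calc Matrix.trace M = Matrix.trace ((S₁ * C) * S₂) := by rw [hMC]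
        _ = Matrix.trace (S₂ * (S₁ * C)) := Matrix.trace_mul_comm _ _
        _ = Matrix.trace (W * (R * C)) := by
            rw [← Matrix.mul_assoc, ← hWR, Matrix.mul_assoc]
        _ = Matrix.trace ((R * C) * W) := Matrix.trace_mul_comm _ _
        _ = Matrix.trace (R * (C * W)) := by rw [Matrix.mul_assoc]
    rw [h1]
    exact aux_trace_le R (C * W) hR hCW
  -- LHS identity
  have hA : S₁ - S₂ * (S₂⁻¹ * S₁⁻¹ * R) = S₁ - S₁⁻¹ * R := by
    rw [← Matrix.mul_assoc, ← Matrix.mul_assoc, hS₂inv, Matrix.one_mul]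
  have hLHS : frob (S₁ - S₂ * (S₂⁻¹ * S₁⁻¹ * R)) ^ 2
      = Matrix.trace Sig₁ + Matrix.trace Sig₂ - 2 * Matrix.trace R := by
    rw [hA, aux_frob_sq]
    have ht : (S₁ - S₁⁻¹ * R)ᵀ = S₁ - R * S₁⁻¹ := by
      rw [Matrix.transpose_sub, Matrix.transpose_mul, hS₁t, hRt, hS₁it]
    rw [ht]
    have hexp : (S₁ - S₁⁻¹ * R) * (S₁ - R * S₁⁻¹)
        = S₁ * S₁ - S₁ * R * S₁⁻¹ - S₁⁻¹ * R * S₁ + S₁⁻¹ * (R * R) * S₁⁻¹ := by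
      simp only [Matrix.sub_mul, Matrix.mul_sub, Matrix.mul_assoc]
      abel
    rw [hexp]
    have e1 : Matrix.trace (S₁ * R * S₁⁻¹) = Matrix.trace R := by
      rw [Matrix.trace_mul_comm, ← Matrix.mul_assoc, hS₁inv', Matrix.one_mul]
    have e2 : Matrix.trace (S₁⁻¹ * R * S₁) = Matrix.trace R := by
      rw [Matrix.trace_mul_comm, ← Matrix.mul_assoc, hS₁inv, Matrix.one_mul]
    have e3 : S₁⁻¹ * (R * R) * S₁⁻¹ = Sig₂ := by
      rw [hRsq]
      calc S₁⁻¹ * (S₁ * Sig₂ * S₁) * S₁⁻¹ = (S₁⁻¹ * S₁) * Sig₂ * (S₁ * S₁⁻¹) := by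
            simp only [Matrix.mul_assoc]
        _ = Sig₂ := by rw [hS₁inv', hS₁inv, Matrix.one_mul, Matrix.mul_one]
    rw [Matrix.trace_add, Matrix.trace_sub, Matrix.trace_sub, e1, e2, e3, hS₁sq]
    ring
  -- RHS identity
  have hRHS : ∫ x, frob (σ₁ x - σ₂ x) ^ 2 ∂m
      = Matrix.trace Sig₁ + Matrix.trace Sig₂ - 2 * Matrix.trace M := by
    have hpt : ∀ x, frob (σ₁ x - σ₂ x) ^ 2
        = ∑ i : Fin 3, ∑ j : Fin 3, (σ₁ x i j - σ₂ x i j) ^ 2 := by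
      intro x
      rw [aux_frob_sq, aux_trace_sq]
      refine Finset.sum_congr rfl fun i _ => Finset.sum_congr rfl fun j _ => by
        simp [Matrix.sub_apply]
    have hint : ∀ i j : Fin 3, Integrable (fun x => (σ₁ x i j - σ₂ x i j) ^ 2) m := by
      intro i j
      exact ((hL2₁ i j).sub (hL2₂ i j)).integrable_sq
    calc ∫ x, frob (σ₁ x - σ₂ x) ^ 2 ∂m
        = ∫ x, ∑ i : Fin 3, ∑ j : Fin 3, (σ₁ x i j - σ₂ x i j) ^ 2 ∂m := by
          congr 1; funext x; exact hpt x
      _ = ∑ i : Fin 3, ∑ j : Fin 3, ∫ x, (σ₁ x i j - σ₂ x i j) ^ 2 ∂m := by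
          rw [integral_finset_sum]
          · exact Finset.sum_congr rfl fun i _ => integral_finset_sum _ fun j _ => hint i j
          · exact fun i _ => integrable_finset_sum _ fun j _ => hint i j
      _ = ∑ i : Fin 3, ∑ j : Fin 3, ((∫ x, σ₁ x i j * σ₁ x i j ∂m)
            - 2 * ∫ x, σ₁ x i j * σ₂ x i j ∂m + ∫ x, σ₂ x i j * σ₂ x i j ∂m) := by
          refine Finset.sum_congr rfl fun i _ => Finset.sum_congr rfl fun j _ => ?_
          have i11 : Integrable (fun x => σ₁ x i j * σ₁ x i j) m :=
            aux_mul_integrable (hL2₁ i j) (hL2₁ i j)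
          have i12 : Integrable (fun x => 2 * (σ₁ x i j * σ₂ x i j)) m :=
            (aux_mul_integrable (hL2₁ i j) (hL2₂ i j)).const_mul 2
          have i22 : Integrable (fun x => σ₂ x i j * σ₂ x i j) m :=
            aux_mul_integrable (hL2₂ i j) (hL2₂ i j)
          have i112 : Integrable (fun x => σ₁ x i j * σ₁ x i j
              - 2 * (σ₁ x i j * σ₂ x i j)) m := i11.sub i12
          have hfe : (fun x => (σ₁ x i j - σ₂ x i j) ^ 2)
              = fun x => σ₁ x i j * σ₁ x i j - 2 * (σ₁ x i j * σ₂ x i j)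
                + σ₂ x i j * σ₂ x i j := funext fun x => by ring
          rw [hfe, integral_add i112 i22, integral_sub i11 i12, integral_const_mul]
      _ = Matrix.trace Sig₁ + Matrix.trace Sig₂ - 2 * Matrix.trace M := by
          have tr_eq : ∀ (τ₁ τ₂ : F → Matrix (Fin 3) (Fin 3) ℝ)
              (A : Matrix (Fin 3) (Fin 3) ℝ)
              (hA : ∀ i j, A i j = ∫ x, (τ₁ x * (τ₂ x)ᵀ) i j ∂m)
              (h1 : ∀ i j, MemLp (fun x => τ₁ x i j) 2 m)
              (h2 : ∀ i j, MemLp (fun x => τ₂ x i j) 2 m),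
              Matrix.trace A = ∑ i : Fin 3, ∑ j : Fin 3, ∫ x, τ₁ x i j * τ₂ x i j ∂m := by
            intro τ₁ τ₂ A hA h1 h2
            calc Matrix.trace A = ∑ i : Fin 3, A i i := rfl
              _ = ∑ i : Fin 3, ∫ x, ∑ j : Fin 3, τ₁ x i j * τ₂ x i j ∂m := by
                  refine Finset.sum_congr rfl fun i _ => ?_
                  rw [hA i i]
                  simp_rw [Matrix.mul_apply, Matrix.transpose_apply]
              _ = ∑ i : Fin 3, ∑ j : Fin 3, ∫ x, τ₁ x i j * τ₂ x i j ∂m := by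
                  refine Finset.sum_congr rfl fun i _ => ?_
                  exact integral_finset_sum _ fun j _ => aux_mul_integrable (h1 i j) (h2 i j)
          rw [tr_eq σ₁ σ₁ Sig₁ hSig₁ hL2₁ hL2₁, tr_eq σ₂ σ₂ Sig₂ hSig₂ hL2₂ hL2₂,
            tr_eq σ₁ σ₂ M hM hL2₁ hL2₂]
          simp only [Finset.mul_sum, ← Finset.sum_sub_distrib, ← Finset.sum_add_distrib]
          refine Finset.sum_congr rfl fun i _ => Finset.sum_congr rfl fun j _ => by ring
  rw [hLHS, hRHS]
  linarith [htraceM]
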